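/- If four roots of unity η₁, η₂, η₃, η₄ satisfy η₁ + η₂ + η₃ + η₄ = 0, then two of them sum to 0 (and hence the other two also sum to 0); i.e., there exist distinct indices i, j with η_i + η_j = 0. -/

import Mathlib

/-- A complex number is a root of unity if some positive power of it equals 1. -/
def IsRootOfUnity (z : ℂ) : Prop := ∃ n : ℕ, 0 < n ∧ z ^ n = 1

lemma unit_circle_of_root_of_unity {z : ℂ} (h : IsRootOfUnity z) :
    z * (starRingEnd ℂ) z = 1 := by
  obtain ⟨n, hn, hzn⟩ := h
  have h1 : Complex.normSq z ^ n = 1 := by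
    rw [← map_pow, hzn, map_one]
  have habs : ‖z‖ = 1 := Complex.norm_eq_one_of_pow_eq_one hzn hn.ne'
  have h2 : Complex.normSq z = 1 := by
    rw [← Complex.sq_norm, habs, one_pow]
  rw [Complex.mul_conj, h2, Complex.ofReal_one]

/-- If four roots of unity sum to zero, then two of them sum to zero. -/
theorem four_roots_of_unity_sum_zero (η : Fin 4 → ℂ)
    (h : ∀ i, IsRootOfUnity (η i))
    (hsum : ∑ i, η i = 0) :
    ∃ i j : Fin 4, i ≠ j ∧ η i + η j = 0 := by
  set a := η 0 with ha
  set b := η 1 with hb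
  set c := η 2 with hc
  set d := η 3 with hd
  have hA := unit_circle_of_root_of_unity (h 0)
  have hB := unit_circle_of_root_of_unity (h 1)
  have hC := unit_circle_of_root_of_unity (h 2)
  have hD := unit_circle_of_root_of_unity (h 3)
  rw [Fin.sum_univ_four] at hsum
  by_cases hab : a + b = 0
  · exact ⟨0, 1, by decide, hab⟩
  · have hconj : (starRingEnd ℂ) (a + b) * (a * b) = a + b := by
      rw [map_add]
      linear_combination b * hA + a * hB
    have hcdconj : (starRingEnd ℂ) (c + d) * (c * d) = c + d := by
      rw [map_add]
      linear_combination d * hC + c * hD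
    have hab2 : a + b = -(c + d) := by linear_combination hsum
    have hconj2 : (starRingEnd ℂ) (a + b) * (c * d) = a + b := by
      rw [hab2, map_neg]
      linear_combination -hcdconj
    have habcd : a * b = c * d := by
      have hne : (starRingEnd ℂ) (a + b) ≠ 0 := fun h0 =>
        hab (by simpa using congrArg (starRingEnd ℂ) h0)
      exact mul_left_cancel₀ hne (hconj.trans hconj2.symm)
    have key : (a + c) * (b + c) = 0 := by
      linear_combination habcd + c * hsum
    rcases mul_eq_zero.mp key with h1 | h1
    · exact ⟨0, 2, by decide, h1⟩
    · exact ⟨1, 2, by decide, h1⟩
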